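/- arXiv:2304.01338 — 2 statements merged into one kernel-verified Lean document; each statement's English description precedes it below -/
import Mathlib

section
/- Let K be a field and h₀,…,h_r ∈ K[[x₁,…,xₙ]] formal power series, not all zero. Then there exists a finite composite σ̄ of elementary monomial substitutions on K[[x₁,…,xₙ]], an exponent vector d ∈ ℕⁿ with associated monomial M = x₁^{d₁}⋯xₙ^{dₙ}, and power series h̃₀,…,h̃_r ∈ K[[x₁,…,xₙ]] such that σ̄(hᵢ) = M·h̃ᵢ for every 0 ≤ i ≤ r, and the constant coefficient of h̃_j is nonzero for at least one 0 ≤ j ≤ r. -/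
open scoped Classical in
/-- The `K`-linear substitution of monomials along an (injective) map `T` on exponents:
it sends the monomial `x^e` to `x^{T e}`. -/
noncomputable def exponentSubst {K : Type*} [CommRing K] {n : ℕ}
    (T : (Fin n →₀ ℕ) → (Fin n →₀ ℕ)) (F : MvPowerSeries (Fin n) K) :
    MvPowerSeries (Fin n) K :=
  fun d => if h : ∃ e, T e = d then MvPowerSeries.coeff h.choose F else 0

/-- An elementary monomial substitution on `K[[x₁,…,xₙ]]`: the endomorphism induced
either by a permutation of the variables, or (for `r` with 1-based index `1 < r ≤ n`,
i.e. `0 < (r : ℕ)` in 0-based indexing) by `xᵢ ↦ xᵢxᵣ` for `i < r` and `xᵢ ↦ xᵢ` for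
`i ≥ r`; on exponents the latter sends `e` to `e + (∑_{i<r} eᵢ)·δᵣ`. -/
def IsElemMonomialSubst {K : Type*} [CommRing K] {n : ℕ}
    (σ : MvPowerSeries (Fin n) K → MvPowerSeries (Fin n) K) : Prop :=
  (∃ e : Equiv.Perm (Fin n), σ = exponentSubst (Finsupp.equivMapDomain e)) ∨
  (∃ r : Fin n, 0 < (r : ℕ) ∧ σ = exponentSubst
    (fun a => a + Finsupp.single r (∑ i ∈ Finset.univ.filter (fun i => i < r), a i)))

namespace MonPrin

variable {K : Type*} [CommRing K] {n : ℕ}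

abbrev Exp (n : ℕ) := Fin n →₀ ℕ

def IsElemT {n : ℕ} (T : Exp n → Exp n) : Prop :=
  (∃ e : Equiv.Perm (Fin n), T = Finsupp.equivMapDomain e) ∨
  (∃ r : Fin n, 0 < (r : ℕ) ∧ T = fun a =>
    a + Finsupp.single r (∑ i ∈ Finset.univ.filter (fun i => i < r), a i))

theorem IsElemT.injective {T : Exp n → Exp n} (hT : IsElemT T) : Function.Injective T := by
  rcases hT with ⟨e, rfl⟩ | ⟨r, hr, rfl⟩
  · intro a b hab
    have := congrArg (Finsupp.equivMapDomain e.symm) hab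
    simpa [← Finsupp.equivMapDomain_trans] using this
  · intro a b hab
    have happ : ∀ k, a k + (Finsupp.single r (∑ i ∈ Finset.univ.filter (fun i => i < r), a i)) k
        = b k + (Finsupp.single r (∑ i ∈ Finset.univ.filter (fun i => i < r), b i)) k := by
      intro k
      have h2 := Finsupp.ext_iff.1 hab k
      simpa [Finsupp.add_apply] using h2
    have hne : ∀ k, k ≠ r → a k = b k := by
      intro k hk
      have := happ k
      simpa [Finsupp.single_apply, (Ne.symm hk)] using this
    have hsum : (∑ i ∈ Finset.univ.filter (fun i => i < r), a i)
        = ∑ i ∈ Finset.univ.filter (fun i => i < r), b i := by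
      refine Finset.sum_congr rfl fun i hi => ?_
      exact hne i (by simp at hi; exact ne_of_lt hi)
    have hrr : a r = b r := by
      have := happ r
      simpa [Finsupp.single_apply, hsum] using this
    ext k
    by_cases hk : k = r
    · subst hk; exact hrr
    · exact hne k hk

theorem IsElemT.monotone {T : Exp n → Exp n} (hT : IsElemT T) : Monotone T := by
  rcases hT with ⟨e, rfl⟩ | ⟨r, hr, rfl⟩
  · intro a b hab
    rw [Finsupp.le_def]
    intro i
    simpa [Finsupp.equivMapDomain_apply] using hab (e.symm i)
  · intro a b hab
    rw [Finsupp.le_def]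
    intro k
    simp only [Finsupp.add_apply, Finsupp.single_apply]
    gcongr
    · exact hab k
    · split
      · exact Finset.sum_le_sum fun i _ => hab i
      · exact le_refl 0

end MonPrin

namespace MonPrin

variable {K : Type*} [CommRing K] {n : ℕ}

/-- composite of a list of exponent maps -/
def compT {n : ℕ} (L : List (Exp n → Exp n)) : Exp n → Exp n := L.foldr (· ∘ ·) id

@[simp] theorem compT_nil : compT ([] : List (Exp n → Exp n)) = id := rfl

@[simp] theorem compT_cons (T : Exp n → Exp n) (L : List (Exp n → Exp n)) :
    compT (T :: L) = T ∘ compT L := rfl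

theorem compT_append (L₁ L₂ : List (Exp n → Exp n)) :
    compT (L₁ ++ L₂) = compT L₁ ∘ compT L₂ := by
  induction L₁ with
  | nil => rfl
  | cons T L ih => simp [ih, Function.comp_assoc]

theorem compT_injective {L : List (Exp n → Exp n)} (hL : ∀ T ∈ L, IsElemT T) :
    Function.Injective (compT L) := by
  induction L with
  | nil => exact fun a b h => h
  | cons T L ih =>
    rw [compT_cons]
    exact ((hL T (by simp)).injective).comp (ih fun T' hT' => hL T' (by simp [hT']))

theorem compT_monotone {L : List (Exp n → Exp n)} (hL : ∀ T ∈ L, IsElemT T) :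
    Monotone (compT L) := by
  induction L with
  | nil => exact fun a b h => h
  | cons T L ih =>
    rw [compT_cons]
    exact ((hL T (by simp)).monotone).comp (ih fun T' hT' => hL T' (by simp [hT']))

theorem exponentSubst_apply_of_injective {T : Exp n → Exp n} (hT : Function.Injective T)
    (F : MvPowerSeries (Fin n) K) (e : Exp n) :
    exponentSubst T F (T e) = MvPowerSeries.coeff e F := by
  rw [exponentSubst]
  have h : ∃ e', T e' = T e := ⟨e, rfl⟩
  rw [dif_pos h]
  have : h.choose = e := hT h.choose_spec
  rw [this]

theorem exponentSubst_apply_of_not_mem {T : Exp n → Exp n} {d : Exp n}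
    (hd : ∀ e, T e ≠ d) (F : MvPowerSeries (Fin n) K) :
    exponentSubst T F d = 0 := by
  rw [exponentSubst, dif_neg]
  rintro ⟨e, he⟩
  exact hd e he

theorem exponentSubst_id : exponentSubst (K := K) (id : Exp n → Exp n) = id := by
  funext F d
  show exponentSubst id F d = F d
  have := exponentSubst_apply_of_injective (T := (id : Exp n → Exp n))
    (fun a b h => h) F d
  simpa [MvPowerSeries.coeff_apply] using this

theorem exponentSubst_comp {T₁ T₂ : Exp n → Exp n} (h₁ : Function.Injective T₁)
    (h₂ : Function.Injective T₂) :
    exponentSubst (K := K) T₁ ∘ exponentSubst T₂ = exponentSubst (T₁ ∘ T₂) := by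
  funext F d
  show exponentSubst T₁ (exponentSubst T₂ F) d = exponentSubst (T₁ ∘ T₂) F d
  by_cases hd : ∃ e, (T₁ ∘ T₂) e = d
  · obtain ⟨e, rfl⟩ := hd
    rw [exponentSubst_apply_of_injective (h₁.comp h₂) F e]
    show exponentSubst T₁ (exponentSubst T₂ F) (T₁ (T₂ e)) = _
    rw [exponentSubst_apply_of_injective h₁, MvPowerSeries.coeff_apply,
      exponentSubst_apply_of_injective h₂]
  · push_neg at hd
    rw [exponentSubst_apply_of_not_mem hd]
    by_cases hd₁ : ∃ y, T₁ y = d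
    · obtain ⟨y, rfl⟩ := hd₁
      rw [exponentSubst_apply_of_injective h₁, MvPowerSeries.coeff_apply,
        exponentSubst_apply_of_not_mem]
      intro e he
      exact hd e (by simp [he])
    · push_neg at hd₁
      rw [exponentSubst_apply_of_not_mem hd₁]

theorem foldr_map_exponentSubst {L : List (Exp n → Exp n)} (hL : ∀ T ∈ L, IsElemT T) :
    (L.map (exponentSubst (K := K))).foldr (· ∘ ·) id = exponentSubst (compT L) := by
  induction L with
  | nil => simpa using exponentSubst_id.symm
  | cons T L ih =>
    have hL' : ∀ T' ∈ L, IsElemT T' := fun T' hT' => hL T' (by simp [hT'])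
    simp only [List.map_cons, List.foldr_cons, ih hL', compT_cons]
    exact exponentSubst_comp (hL T (by simp)).injective (compT_injective hL')

/-- the shifted series `G/x^e₀` -/
noncomputable def shift (e₀ : Exp n) (G : MvPowerSeries (Fin n) K) : MvPowerSeries (Fin n) K :=
  fun d => MvPowerSeries.coeff (e₀ + d) G

theorem coeff_shift (e₀ d : Exp n) (G : MvPowerSeries (Fin n) K) :
    MvPowerSeries.coeff d (shift e₀ G) = MvPowerSeries.coeff (e₀ + d) G := rfl

/-- dividing out a monomial from a series supported above `e₀` -/
theorem eq_monomial_mul_shift (G : MvPowerSeries (Fin n) K) (e₀ : Exp n)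
    (hmin : ∀ d : Exp n, MvPowerSeries.coeff d G ≠ 0 → e₀ ≤ d) :
    G = (MvPowerSeries.monomial e₀ 1) * shift e₀ G := by
  ext m
  rw [MvPowerSeries.coeff_monomial_mul]
  split
  · next h =>
    rw [one_mul, coeff_shift, add_tsub_cancel_of_le h]
  · next h =>
    by_contra hc
    exact h (hmin m fun h0 => hc (by rw [h0]))

theorem prod_X_pow_eq_monomial (e₀ : Exp n) :
    (∏ k, MvPowerSeries.X (R := K) k ^ e₀ k) = MvPowerSeries.monomial e₀ 1 := by
  have : ∀ (s : Finset (Fin n)),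
      (∏ k ∈ s, MvPowerSeries.X (R := K) k ^ e₀ k)
        = MvPowerSeries.monomial (∑ k ∈ s, Finsupp.single k (e₀ k)) 1 := by
    intro s
    induction s using Finset.cons_induction with
    | empty => simp [MvPowerSeries.monomial_zero_one]
    | cons a s ha ih =>
      rw [Finset.prod_cons, Finset.sum_cons, ih, MvPowerSeries.X_pow_eq,
        MvPowerSeries.monomial_mul_monomial, one_mul]
  rw [this Finset.univ, Finsupp.univ_sum_single]

end MonPrin

namespace MonPrin

variable {n : ℕ}

theorem exists_perm (i j : Fin n) (hij : i ≠ j) (z0 z1 : Fin n)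
    (h0 : (z0 : ℕ) = 0) (h1 : (z1 : ℕ) = 1) :
    ∃ e : Equiv.Perm (Fin n), e i = z0 ∧ e j = z1 := by
  have hz01 : z0 ≠ z1 := by
    intro h; rw [h] at h0; omega
  set e1 := Equiv.swap i z0 with he1
  have he1i : e1 i = z0 := Equiv.swap_apply_left i z0
  have hj1 : e1 j ≠ z0 := fun h => hij ((e1.injective (h.trans he1i.symm)).symm)
  refine ⟨e1.trans (Equiv.swap (e1 j) z1), ?_, ?_⟩
  · simp only [Equiv.trans_apply, he1i]
    exact Equiv.swap_apply_of_ne_of_ne (Ne.symm hj1) hz01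
  · simp only [Equiv.trans_apply]
    exact Equiv.swap_apply_left (e1 j) z1

theorem exists_addMap (i j : Fin n) (hij : i ≠ j) :
    ∃ L : List (Exp n → Exp n), (∀ T ∈ L, IsElemT T) ∧
      ∀ a : Exp n, compT L a = a + Finsupp.single j (a i) := by
  have hn : 2 ≤ n := by
    by_contra hlt
    push_neg at hlt
    interval_cases n
    · exact i.elim0
    · exact hij (Subsingleton.elim i j)
  set z0 : Fin n := ⟨0, by omega⟩ with hz0
  set z1 : Fin n := ⟨1, by omega⟩ with hz1
  obtain ⟨e, he0, he1⟩ := exists_perm i j hij z0 z1 rfl rfl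
  have hfilter : Finset.univ.filter (fun m => m < z1) = {z0} := by
    ext m
    simp only [Finset.mem_filter, Finset.mem_univ, true_and, Finset.mem_singleton,
      Fin.lt_def, Fin.ext_iff, hz1, hz0]
    omega
  refine ⟨[Finsupp.equivMapDomain (e.symm : Equiv.Perm (Fin n)),
    fun a => a + Finsupp.single z1 (∑ m ∈ Finset.univ.filter (fun m => m < z1), a m),
    Finsupp.equivMapDomain (e : Equiv.Perm (Fin n))], ?_, ?_⟩
  · intro T hT
    simp only [List.mem_cons, List.not_mem_nil, or_false] at hT
    rcases hT with rfl | rfl | rfl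
    · exact Or.inl ⟨e.symm, rfl⟩
    · exact Or.inr ⟨z1, by simp [hz1], rfl⟩
    · exact Or.inl ⟨e, rfl⟩
  · intro a
    ext k
    simp only [compT_cons, compT_nil, Function.comp_apply, id_eq]
    rw [Finsupp.equivMapDomain_apply, Equiv.symm_symm]
    have hsymm0 : e.symm z0 = i := by rw [← he0, Equiv.symm_apply_apply]
    have hcond : (z1 = e k) ↔ (j = k) := by
      constructor
      · intro h
        exact e.injective (by rw [he1, ← h])
      · intro h
        rw [← h, he1]
    simp only [Finsupp.add_apply, Finsupp.single_apply, hfilter, Finset.sum_singleton,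
      Finsupp.equivMapDomain_apply, Equiv.symm_apply_apply, hsymm0]
    by_cases hk : j = k
    · rw [if_pos (hcond.2 hk), if_pos hk]
    · rw [if_neg (fun h => hk (hcond.1 h)), if_neg hk]

/-- the "distance" measure for the Euclidean algorithm. -/
def mu (a b : Exp n) : ℕ := ∑ k, ((a k - b k) + (b k - a k))

theorem pair_comparable (a b : Exp n) :
    ∃ L : List (Exp n → Exp n), (∀ T ∈ L, IsElemT T) ∧
      (compT L a ≤ compT L b ∨ compT L b ≤ compT L a) := by
  suffices H : ∀ N (a b : Exp n), mu a b = N →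
      ∃ L : List (Exp n → Exp n), (∀ T ∈ L, IsElemT T) ∧
        (compT L a ≤ compT L b ∨ compT L b ≤ compT L a) by
    exact H (mu a b) a b rfl
  intro N
  induction N using Nat.strong_induction_on with
  | _ N ih =>
  intro a b hN
  by_cases h1 : a ≤ b
  · exact ⟨[], by simp, Or.inl h1⟩
  by_cases h2 : b ≤ a
  · exact ⟨[], by simp, Or.inr h2⟩
  rw [Finsupp.le_def] at h1 h2
  push_neg at h1 h2
  obtain ⟨j, hj⟩ := h1   -- b j < a j? no: ¬ a ≤ b gives ∃ j, b j < a j... careful below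
  obtain ⟨i, hi⟩ := h2
  -- hj : b j < a j is wrong naming; h1 : ∃ i, b i < a i comes from ¬∀ i, a i ≤ b i
  -- rename: from h1 we get index where b < a; from h2 index where a < b.
  -- hj : b j < a j, hi : a i < b i
  have hij : i ≠ j := by
    intro h; subst h; omega
  by_cases hc : a j + a i ≤ b j + b i
  · -- add coordinate j (where a is bigger) to coordinate i (where b is bigger)
    obtain ⟨L₁, hL₁, hE⟩ := exists_addMap j i hij.symm
    have hdec : mu (a + Finsupp.single i (a j)) (b + Finsupp.single i (b j)) < N := by
      rw [← hN]
      apply Finset.sum_lt_sum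
      · intro k _
        by_cases hk : i = k
        · subst hk
          simp only [Finsupp.add_apply, Finsupp.single_apply, if_pos rfl, if_true,
            eq_self_iff_true]
          omega
        · simp only [Finsupp.add_apply, Finsupp.single_apply, if_neg hk, add_zero]
          exact le_refl _
      · refine ⟨i, Finset.mem_univ i, ?_⟩
        simp only [Finsupp.add_apply, Finsupp.single_apply, if_pos rfl, if_true,
          eq_self_iff_true]
        omega
    obtain ⟨L₂, hL₂, hcmp⟩ := ih _ hdec _ _ rfl
    refine ⟨L₂ ++ L₁, ?_, ?_⟩
    · intro T hT
      rcases List.mem_append.1 hT with h | h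
      exacts [hL₂ T h, hL₁ T h]
    · rw [compT_append]
      simp only [Function.comp_apply, hE a, hE b]
      exact hcmp
  · -- add coordinate i (where b is bigger) to coordinate j (where b is smaller)
    obtain ⟨L₁, hL₁, hE⟩ := exists_addMap i j hij
    have hdec : mu (a + Finsupp.single j (a i)) (b + Finsupp.single j (b i)) < N := by
      rw [← hN]
      apply Finset.sum_lt_sum
      · intro k _
        by_cases hk : j = k
        · subst hk
          simp only [Finsupp.add_apply, Finsupp.single_apply, if_pos rfl, if_true,
            eq_self_iff_true]
          omega
        · simp only [Finsupp.add_apply, Finsupp.single_apply, if_neg hk, add_zero]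
          exact le_refl _
      · refine ⟨j, Finset.mem_univ j, ?_⟩
        simp only [Finsupp.add_apply, Finsupp.single_apply, if_pos rfl, if_true,
          eq_self_iff_true]
        omega
    obtain ⟨L₂, hL₂, hcmp⟩ := ih _ hdec _ _ rfl
    refine ⟨L₂ ++ L₁, ?_, ?_⟩
    · intro T hT
      rcases List.mem_append.1 hT with h | h
      exacts [hL₂ T h, hL₁ T h]
    · rw [compT_append]
      simp only [Function.comp_apply, hE a, hE b]
      exact hcmp

end MonPrin

namespace MonPrin

variable {n : ℕ}

theorem comparable_with_all (x : Exp n) (s : Finset (Exp n)) :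
    ∃ L : List (Exp n → Exp n), (∀ T ∈ L, IsElemT T) ∧
      ∀ f ∈ s, (compT L x ≤ compT L f ∨ compT L f ≤ compT L x) := by
  induction s using Finset.cons_induction with
  | empty => exact ⟨[], by simp, by simp⟩
  | cons y s hy ih =>
    obtain ⟨L₁, hL₁, hcmp₁⟩ := ih
    obtain ⟨L₂, hL₂, hcmp₂⟩ := pair_comparable (compT L₁ x) (compT L₁ y)
    refine ⟨L₂ ++ L₁, ?_, ?_⟩
    · intro T hT
      rcases List.mem_append.1 hT with h | h
      exacts [hL₂ T h, hL₁ T h]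
    · intro f hf
      rw [compT_append]
      rcases Finset.mem_cons.1 hf with rfl | hf
      · exact hcmp₂
      · rcases hcmp₁ f hf with h | h
        · exact Or.inl (compT_monotone hL₂ h)
        · exact Or.inr (compT_monotone hL₂ h)

theorem finset_comparable (s : Finset (Exp n)) :
    ∃ L : List (Exp n → Exp n), (∀ T ∈ L, IsElemT T) ∧
      ∀ a ∈ s, ∀ b ∈ s, (compT L a ≤ compT L b ∨ compT L b ≤ compT L a) := by
  induction s using Finset.cons_induction with
  | empty => exact ⟨[], by simp, by simp⟩
  | cons x s hx ih =>
    obtain ⟨L₁, hL₁, hcmp₁⟩ := ih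
    obtain ⟨L₂, hL₂, hcmp₂⟩ := comparable_with_all (compT L₁ x) (s.image (compT L₁))
    refine ⟨L₂ ++ L₁, ?_, ?_⟩
    · intro T hT
      rcases List.mem_append.1 hT with h | h
      exacts [hL₂ T h, hL₁ T h]
    · intro a ha b hb
      rw [compT_append]
      simp only [Function.comp_apply]
      rcases Finset.mem_cons.1 ha with hax | ha
      · rcases Finset.mem_cons.1 hb with hbx | hb
        · rw [hax, hbx]
          exact Or.inl (le_refl _)
        · rw [hax]
          exact hcmp₂ _ (Finset.mem_image_of_mem _ hb)
      · rcases Finset.mem_cons.1 hb with hbx | hb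
        · rw [hbx]
          exact (hcmp₂ _ (Finset.mem_image_of_mem _ ha)).symm
        · rcases hcmp₁ a ha b hb with h | h
          · exact Or.inl (compT_monotone hL₂ h)
          · exact Or.inr (compT_monotone hL₂ h)

theorem finset_min (s : Finset (Exp n)) (hs : s.Nonempty)
    (htot : ∀ a ∈ s, ∀ b ∈ s, (a ≤ b ∨ b ≤ a)) :
    ∃ m ∈ s, ∀ b ∈ s, m ≤ b := by
  induction s using Finset.cons_induction with
  | empty => exact absurd hs (by simp)
  | cons x s hx ih =>
    rcases s.eq_empty_or_nonempty with rfl | hs'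
    · exact ⟨x, by simp, by simp⟩
    · obtain ⟨m, hm, hmin⟩ := ih hs'
        (fun a ha b hb => htot a (Finset.mem_cons_of_mem ha) b (Finset.mem_cons_of_mem hb))
      rcases htot m (Finset.mem_cons_of_mem hm) x (Finset.mem_cons_self x s) with h | h
      · refine ⟨m, Finset.mem_cons_of_mem hm, ?_⟩
        intro b hb
        rcases Finset.mem_cons.1 hb with rfl | hb
        · exact h
        · exact hmin b hb
      · refine ⟨x, Finset.mem_cons_self x s, ?_⟩
        intro b hb
        rcases Finset.mem_cons.1 hb with rfl | hb
        · exact le_refl _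
        · exact le_trans h (hmin b hb)

/-- Dickson's lemma: a finite dominating subset. -/
theorem exists_dominating (S : Set (Exp n)) :
    ∃ F : Finset (Exp n), ↑F ⊆ S ∧ ∀ s ∈ S, ∃ f ∈ F, f ≤ s := by
  classical
  set M : Set (Exp n) := {x | x ∈ S ∧ ∀ y ∈ S, y ≤ x → y = x} with hM
  have hanti : IsAntichain (· ≤ ·) M := by
    intro a ha b hb hab hle
    exact hab (hb.2 a ha.1 hle)
  have hfin : M.Finite :=
    hanti.finite_of_partiallyWellOrderedOn (Set.isPWO_of_wellQuasiOrderedLE M)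
  refine ⟨hfin.toFinset, ?_, ?_⟩
  · intro x hx
    exact (hfin.mem_toFinset.1 hx).1
  · intro s hs
    obtain ⟨m, hm, hmin⟩ := (wellFounded_lt (α := Exp n)).has_min {y | y ∈ S ∧ y ≤ s} ⟨s, hs, le_refl s⟩
    refine ⟨m, hfin.mem_toFinset.2 ⟨hm.1, ?_⟩, hm.2⟩
    intro y hy hle
    by_contra hne
    exact hmin y ⟨hy, le_trans hle hm.2⟩ (lt_of_le_of_ne hle hne)

theorem exists_good (S : Set (Exp n)) (hS : S.Nonempty) :
    ∃ L : List (Exp n → Exp n), (∀ T ∈ L, IsElemT T) ∧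
      ∃ a ∈ S, ∀ x ∈ S, compT L a ≤ compT L x := by
  obtain ⟨F, hFS, hdom⟩ := exists_dominating S
  obtain ⟨s₀, hs₀⟩ := hS
  obtain ⟨f₀, hf₀F, _⟩ := hdom s₀ hs₀
  obtain ⟨L, hL, htot⟩ := finset_comparable F
  have himg : ∀ a ∈ F.image (compT L), ∀ b ∈ F.image (compT L), (a ≤ b ∨ b ≤ a) := by
    intro a ha b hb
    obtain ⟨a', ha', rfl⟩ := Finset.mem_image.1 ha
    obtain ⟨b', hb', rfl⟩ := Finset.mem_image.1 hb
    exact htot a' ha' b' hb'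
  obtain ⟨m, hm, hmin⟩ := finset_min (F.image (compT L))
    ⟨compT L f₀, Finset.mem_image_of_mem _ hf₀F⟩ himg
  obtain ⟨a, haF, rfl⟩ := Finset.mem_image.1 hm
  refine ⟨L, hL, a, hFS haF, ?_⟩
  intro x hx
  obtain ⟨f, hfF, hfx⟩ := hdom x hx
  exact le_trans (hmin _ (Finset.mem_image_of_mem _ hfF)) (compT_monotone hL hfx)

end MonPrin


/-- Theorem 4 of the paper: monomial principalization for power series.
For power series `h₀, …, h_r ∈ K[[x₁,…,xₙ]]`, not all zero, there is a finite composite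
`σ̄` of elementary monomial substitutions, an exponent vector `d ∈ ℕⁿ` with associated
monomial `M = x₁^{d₁}⋯xₙ^{dₙ}`, and power series `h̃₀, …, h̃_r` with `σ̄(hᵢ) = M·h̃ᵢ` for
all `i` and `h̃_j(0) ≠ 0` for some `j`. -/
theorem monomial_principalization_powerSeries
    {K : Type*} [Field K] (n r : ℕ)
    (h : Fin (r + 1) → MvPowerSeries (Fin n) K) (hnz : ∃ i, h i ≠ 0) :
    ∃ (L : List (MvPowerSeries (Fin n) K → MvPowerSeries (Fin n) K))
      (d : Fin n → ℕ) (ht : Fin (r + 1) → MvPowerSeries (Fin n) K),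
      (∀ σ ∈ L, IsElemMonomialSubst σ) ∧
      (∀ i, (L.foldr (· ∘ ·) id) (h i) = (∏ k, MvPowerSeries.X k ^ d k) * ht i) ∧
      (∃ j, MvPowerSeries.constantCoeff (ht j) ≠ 0) := by
  classical
  have hSne : {d : Fin n →₀ ℕ | ∃ i, MvPowerSeries.coeff d (h i) ≠ 0}.Nonempty := by
    obtain ⟨i, hi⟩ := hnz
    obtain ⟨d, hd⟩ := (MvPowerSeries.ne_zero_iff_exists_coeff_ne_zero (h i)).1 hi
    exact ⟨d, i, hd⟩
  obtain ⟨LT, hLT, a, haS, hamin⟩ :=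
    MonPrin.exists_good {d : Fin n →₀ ℕ | ∃ i, MvPowerSeries.coeff d (h i) ≠ 0} hSne
  have hTcInj : Function.Injective (MonPrin.compT LT) := MonPrin.compT_injective hLT
  refine ⟨LT.map (exponentSubst (K := K)), fun k => MonPrin.compT LT a k,
    fun i => MonPrin.shift (MonPrin.compT LT a) (exponentSubst (MonPrin.compT LT) (h i)),
    ?_, ?_, ?_⟩
  · intro σ hσ
    obtain ⟨T, hT, rfl⟩ := List.mem_map.1 hσ
    rcases hLT T hT with ⟨e, rfl⟩ | ⟨rr, hrr, rfl⟩
    · exact Or.inl ⟨e, rfl⟩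
    · exact Or.inr ⟨rr, hrr, rfl⟩
  · intro i
    rw [MonPrin.foldr_map_exponentSubst hLT]
    have hprod : (∏ k, MvPowerSeries.X (R := K) k ^ MonPrin.compT LT a k)
        = MvPowerSeries.monomial (MonPrin.compT LT a) 1 :=
      MonPrin.prod_X_pow_eq_monomial _
    rw [hprod]
    apply MonPrin.eq_monomial_mul_shift
    intro d hd
    by_cases hdr : ∃ e, MonPrin.compT LT e = d
    · obtain ⟨e, rfl⟩ := hdr
      rw [MvPowerSeries.coeff_apply,
        MonPrin.exponentSubst_apply_of_injective hTcInj] at hd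
      exact hamin e ⟨i, hd⟩
    · push_neg at hdr
      rw [MvPowerSeries.coeff_apply,
        MonPrin.exponentSubst_apply_of_not_mem hdr] at hd
      exact absurd rfl hd
  · obtain ⟨j, hj⟩ := haS
    refine ⟨j, ?_⟩
    rw [← MvPowerSeries.coeff_zero_eq_constantCoeff_apply, MonPrin.coeff_shift, add_zero,
      MvPowerSeries.coeff_apply, MonPrin.exponentSubst_apply_of_injective hTcInj]
    exact hj
end

section
/- Let K be a field and f, g₁,…,g_r ∈ K[[x₁,…,xₙ]] formal power series. Then f belongs to the ideal (g₁,…,g_r) of K[[x₁,…,xₙ]] if and only if for every n-tuple of positive integers m = (m₁,…,mₙ), the element φ_m(f) belongs to the ideal of the subring K[[t^{m₁},…,t^{mₙ}]] ⊆ K[[t]] generated by φ_m(g₁),…,φ_m(g_r). -/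
open Finsupp in
/-- The substitution `φ_m : K[[x₁,…,xₙ]] → K[[t]]`, `xᵢ ↦ t^{mᵢ}` (for `m` with all
`mᵢ ≥ 1`): the coefficient of `t^k` is the sum of the coefficients of `F` over all
exponent vectors `e` with `∑ᵢ eᵢ mᵢ = k`. -/
noncomputable def monomialCurveSubst {K : Type*} [CommRing K] {n : ℕ} (m : Fin n → ℕ)
    (F : MvPowerSeries (Fin n) K) : PowerSeries K :=
  PowerSeries.mk fun k =>
    ∑ e ∈ (Finset.Iic (equivFunOnFinite.symm fun _ : Fin n => k)).filter
        (fun e : Fin n →₀ ℕ => ∑ i, e i * m i = k),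
      MvPowerSeries.coeff e F

namespace MCS

variable {K : Type*} [CommRing K] {n : ℕ}

def deg (e : Fin n →₀ ℕ) : ℕ := ∑ i, e i

lemma deg_add (p q : Fin n →₀ ℕ) : deg (p + q) = deg p + deg q := by
  simp [deg, Finset.sum_add_distrib]


section Subst
variable (m : Fin n → ℕ)

/-- weight of an exponent vector -/
def w (e : Fin n →₀ ℕ) : ℕ := ∑ i, e i * m i

lemma w_add (e e' : Fin n →₀ ℕ) : w m (e + e') = w m e + w m e' := by
  simp [w, add_mul, Finset.sum_add_distrib]

lemma w_zero : w m 0 = 0 := by simp [w]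

/-- the finset of exponent vectors of weight `k` -/
noncomputable def W (k : ℕ) : Finset (Fin n →₀ ℕ) :=
  (Finset.Iic (Finsupp.equivFunOnFinite.symm fun _ : Fin n => k)).filter
    (fun e : Fin n →₀ ℕ => w m e = k)

variable {m} (hm : ∀ i, 0 < m i)
include hm

lemma mem_W {k : ℕ} {e : Fin n →₀ ℕ} : e ∈ W m k ↔ w m e = k := by
  constructor
  · exact fun h => (Finset.mem_filter.mp h).2
  · intro h
    refine Finset.mem_filter.mpr ⟨Finset.mem_Iic.mpr ?_, h⟩
    intro i
    simp only [Finsupp.equivFunOnFinite_symm_apply_apply]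
    calc e i ≤ e i * m i := Nat.le_mul_of_pos_right _ (hm i)
      _ ≤ ∑ j, e j * m j :=
        Finset.single_le_sum (f := fun j => e j * m j) (fun j _ => Nat.zero_le _)
          (Finset.mem_univ i)
      _ = k := h

lemma coeff_mcs (F : MvPowerSeries (Fin n) K) (k : ℕ) :
    PowerSeries.coeff k (monomialCurveSubst m F) =
      ∑ e ∈ W m k, MvPowerSeries.coeff e F := by
  simp [monomialCurveSubst, W, w]
  exact Finset.sum_congr (Finset.filter_congr_decidable _ _ _) fun _ _ => rfl

lemma mcs_add (F G : MvPowerSeries (Fin n) K) :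
    monomialCurveSubst m (F + G) = monomialCurveSubst m F + monomialCurveSubst m G := by
  ext k
  simp [coeff_mcs hm, Finset.sum_add_distrib]

lemma mcs_one : monomialCurveSubst m (1 : MvPowerSeries (Fin n) K) = 1 := by
  classical
  ext k
  rw [coeff_mcs hm]
  simp only [MvPowerSeries.coeff_one, PowerSeries.coeff_one]
  rw [Finset.sum_ite_eq' (W m k) 0 (fun _ => (1 : K))]
  have : (0 : Fin n →₀ ℕ) ∈ W m k ↔ k = 0 := by
    rw [mem_W hm, w_zero, eq_comm]
  split_ifs with h1 h2 h2 <;> simp_all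

lemma mcs_mul (F G : MvPowerSeries (Fin n) K) :
    monomialCurveSubst m (F * G) = monomialCurveSubst m F * monomialCurveSubst m G := by
  classical
  ext k
  rw [PowerSeries.coeff_mul, coeff_mcs hm]
  simp only [MvPowerSeries.coeff_mul, coeff_mcs hm]
  rw [Finset.sum_sigma']
  trans (∑ y ∈ (Finset.HasAntidiagonal.antidiagonal k).sigma (fun ab => W m ab.1 ×ˢ W m ab.2),
    MvPowerSeries.coeff y.2.1 F * MvPowerSeries.coeff y.2.2 G)
  swap
  · rw [Finset.sum_sigma]
    refine Finset.sum_congr rfl fun ab _ => ?_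
    rw [Finset.sum_mul_sum, Finset.sum_product]
  refine Finset.sum_nbij' (i := fun x => ⟨(w m x.2.1, w m x.2.2), x.2⟩)
    (j := fun y => ⟨y.2.1 + y.2.2, y.2⟩) ?_ ?_ ?_ ?_ ?_
  · rintro ⟨e, p, q⟩ hx
    obtain ⟨he, hpq⟩ := Finset.mem_sigma.mp hx
    have hpq : p + q = e := Finset.HasAntidiagonal.mem_antidiagonal.mp hpq
    have he : w m e = k := ((mem_W hm).mp he)
    exact Finset.mem_sigma.mpr ⟨Finset.HasAntidiagonal.mem_antidiagonal.mpr (by rw [← w_add, hpq, he]),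
      Finset.mem_product.mpr ⟨(mem_W hm).mpr rfl, (mem_W hm).mpr rfl⟩⟩
  · rintro ⟨⟨a, b⟩, p, q⟩ hy
    obtain ⟨hab, hpq⟩ := Finset.mem_sigma.mp hy
    have hab : a + b = k := Finset.HasAntidiagonal.mem_antidiagonal.mp hab
    have hp := (mem_W hm).mp (Finset.mem_product.mp hpq).1
    have hq := (mem_W hm).mp (Finset.mem_product.mp hpq).2
    exact Finset.mem_sigma.mpr ⟨(mem_W hm).mpr (by rw [w_add, hp, hq, hab]),
      Finset.HasAntidiagonal.mem_antidiagonal.mpr rfl⟩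
  · rintro ⟨e, p, q⟩ hx
    have hpq : p + q = e := Finset.HasAntidiagonal.mem_antidiagonal.mp (Finset.mem_sigma.mp hx).2
    subst hpq; rfl
  · rintro ⟨⟨a, b⟩, p, q⟩ hy
    obtain ⟨-, hpq⟩ := Finset.mem_sigma.mp hy
    have hp : w m p = a := (mem_W hm).mp (Finset.mem_product.mp hpq).1
    have hq : w m q = b := (mem_W hm).mp (Finset.mem_product.mp hpq).2
    show (⟨(w m p, w m q), (p, q)⟩ : (_ : ℕ × ℕ) × ((Fin n →₀ ℕ) × (Fin n →₀ ℕ))) = _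
    rw [hp, hq]
  · rintro ⟨e, p, q⟩ _
    rfl

/-- The substitution bundled as a ring homomorphism. -/
noncomputable def mcsHom : MvPowerSeries (Fin n) K →+* PowerSeries K where
  toFun := monomialCurveSubst m
  map_one' := mcs_one hm
  map_mul' := mcs_mul hm
  map_zero' := by ext k; simp [coeff_mcs hm]
  map_add' := mcs_add hm

@[simp] lemma mcsHom_apply (F : MvPowerSeries (Fin n) K) :
    mcsHom hm F = monomialCurveSubst m F := rfl

lemma coeff_mcs_eq_zero (F : MvPowerSeries (Fin n) K) (k : ℕ)
    (hk : k ∉ AddSubmonoid.closure (Set.range m)) :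
    PowerSeries.coeff k (monomialCurveSubst m F) = 0 := by
  rw [coeff_mcs hm]
  refine Finset.sum_eq_zero fun e he => absurd ?_ hk
  rw [mem_W hm] at he
  rw [← he]
  refine AddSubmonoid.sum_mem _ fun i _ => ?_
  rw [← smul_eq_mul]
  exact nsmul_mem (AddSubmonoid.subset_closure (Set.mem_range_self i)) (e i)

end Subst


variable (K n) in
/-- The ideal of power series of order at least `d`. -/
def J (d : ℕ) : Ideal (MvPowerSeries (Fin n) K) where
  carrier := {h | ∀ e : Fin n →₀ ℕ, deg e < d → MvPowerSeries.coeff e h = 0}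
  add_mem' := fun ha hb e he => by rw [map_add, ha e he, hb e he, add_zero]
  zero_mem' := fun e he => by simp
  smul_mem' := fun c x hx => by
    intro e he
    rw [smul_eq_mul, MvPowerSeries.coeff_mul]
    refine Finset.sum_eq_zero fun p hp => ?_
    have hpq : p.1 + p.2 = e := Finset.HasAntidiagonal.mem_antidiagonal.mp hp
    have : deg p.2 < d := by
      refine lt_of_le_of_lt ?_ he
      rw [← hpq, deg_add]; omega
    rw [hx p.2 this, mul_zero]

lemma mem_J {d : ℕ} {h : MvPowerSeries (Fin n) K} :
    h ∈ J K n d ↔ ∀ e : Fin n →₀ ℕ, deg e < d → MvPowerSeries.coeff e h = 0 := Iff.rfl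

lemma J_antitone {d d' : ℕ} (hdd : d ≤ d') : J K n d' ≤ J K n d :=
  fun _ hx e he => hx e (lt_of_lt_of_le he hdd)

lemma eq_zero_of_forall_mem_J {h : MvPowerSeries (Fin n) K} (hh : ∀ d, h ∈ J K n d) : h = 0 := by
  ext e
  simpa using hh (deg e + 1) e (Nat.lt_succ_self _)

variable (n) in
/-- Exponents of degree `< d`. -/
noncomputable def Ed (d : ℕ) : Finset (Fin n →₀ ℕ) :=
  (Finset.Iic (Finsupp.equivFunOnFinite.symm fun _ : Fin n => d)).filter (fun e => deg e < d)

lemma mem_Ed {d : ℕ} {e : Fin n →₀ ℕ} : e ∈ Ed n d ↔ deg e < d := by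
  constructor
  · exact fun h => (Finset.mem_filter.mp h).2
  · intro h
    refine Finset.mem_filter.mpr ⟨Finset.mem_Iic.mpr ?_, h⟩
    intro i
    simp only [Finsupp.equivFunOnFinite_symm_apply_apply]
    have h1 : e i ≤ ∑ j, e j :=
      Finset.single_le_sum (f := fun j => e j) (fun j _ => Nat.zero_le _) (Finset.mem_univ i)
    exact le_trans h1 (le_of_lt h)

lemma mk_trunc (d : ℕ) (h : MvPowerSeries (Fin n) K) :
    Ideal.Quotient.mk (J K n d) h =
      ∑ e ∈ Ed n d, Ideal.Quotient.mk (J K n d)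
        (MvPowerSeries.coeff e h • MvPowerSeries.monomial e 1) := by
  classical
  rw [← map_sum, Ideal.Quotient.mk_eq_mk_iff_sub_mem]
  intro e' he'
  rw [map_sub, map_sum]
  have : ∀ e ∈ Ed n d, MvPowerSeries.coeff e'
      (MvPowerSeries.coeff e h • MvPowerSeries.monomial e (1 : K)) =
      if e' = e then MvPowerSeries.coeff e h else 0 := by
    intro e _
    rw [LinearMap.map_smul, MvPowerSeries.coeff_monomial]
    split_ifs <;> simp
  rw [Finset.sum_congr rfl this, Finset.sum_ite_eq (Ed n d) e' (fun e => MvPowerSeries.coeff e h)]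
  rw [if_pos (mem_Ed.mpr he'), sub_self]

variable (K n) in
lemma finite_quot_J (d : ℕ) :
    Module.Finite K (MvPowerSeries (Fin n) K ⧸ J K n d) := by
  classical
  rw [Module.finite_def]
  refine ⟨(Ed n d).image (fun e => Ideal.Quotient.mk (J K n d) (MvPowerSeries.monomial e 1)), ?_⟩
  rw [eq_top_iff]
  rintro x -
  obtain ⟨h, rfl⟩ := Ideal.Quotient.mk_surjective x
  rw [mk_trunc d h]
  refine Submodule.sum_mem _ fun e he => ?_
  have hsmul : Ideal.Quotient.mk (J K n d) (MvPowerSeries.coeff e h • MvPowerSeries.monomial e (1:K))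
      = MvPowerSeries.coeff e h • Ideal.Quotient.mk (J K n d) (MvPowerSeries.monomial e (1:K)) := by
    rw [← Ideal.Quotient.mkₐ_eq_mk K, map_smul]
  rw [hsmul]
  exact Submodule.smul_mem _ _ (Submodule.subset_span (Finset.mem_coe.mpr
    (Finset.mem_image_of_mem _ he)))



lemma geom_nat {b : ℕ} (hb : 1 ≤ b) (N : ℕ) : ∑ i ∈ Finset.range N, (b - 1) * b ^ i = b ^ N - 1 := by
  induction N with
  | zero => simp
  | succ N ih =>
    rw [Finset.sum_range_succ, ih, pow_succ]
    have h1 : 1 ≤ b ^ N := Nat.one_le_pow _ _ (by omega)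
    have h2 : (b - 1) * b ^ N = b ^ N * b - b ^ N := by rw [Nat.sub_mul, one_mul, mul_comm]
    have h3 : b ^ N ≤ b ^ N * b := Nat.le_mul_of_pos_right _ (by omega)
    rw [h2]
    omega

lemma digits_lt_sum {b : ℕ} (hb : 1 ≤ b) {N : ℕ} (e : Fin N → ℕ) (he : ∀ i, e i < b) :
    ∑ i, e i * b ^ (i : ℕ) < b ^ N := by
  have h1 : ∑ i, e i * b ^ (i : ℕ) ≤ ∑ i : Fin N, (b - 1) * b ^ (i : ℕ) := by
    refine Finset.sum_le_sum fun i _ => Nat.mul_le_mul_right _ ?_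
    have := he i; omega
  have h2 : ∑ i : Fin N, (b - 1) * b ^ (i : ℕ) = b ^ N - 1 := by
    rw [Fin.sum_univ_eq_sum_range (fun i => (b - 1) * b ^ i)]
    exact geom_nat hb N
  have h3 : 1 ≤ b ^ N := Nat.one_le_pow _ _ (by omega)
  omega

lemma digits_unique : ∀ {N : ℕ} {b : ℕ} (e e' : Fin N → ℕ), (∀ i, e i < b) → (∀ i, e' i < b) →
    (∑ i, e i * b ^ (i : ℕ)) = (∑ i, e' i * b ^ (i : ℕ)) → ∀ i, e i = e' i := by
  intro N
  induction N with
  | zero => intro b e e' _ _ _ i; exact absurd i.2 (by omega)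
  | succ N ih =>
    intro b e e' he he' hsum i
    have hb : 0 < b := Nat.pos_of_ne_zero (by intro h; subst h; exact absurd (he 0) (by omega))
    have hexp : ∀ (v : Fin (N + 1) → ℕ), ∑ j, v j * b ^ (j : ℕ) =
        v 0 + b * ∑ j : Fin N, v j.succ * b ^ (j : ℕ) := by
      intro v
      rw [Fin.sum_univ_succ, Finset.mul_sum]
      simp only [Fin.val_zero, pow_zero, mul_one, Fin.val_succ]
      congr 1
      refine Finset.sum_congr rfl fun j _ => ?_
      rw [pow_succ]
      ring
    rw [hexp e, hexp e'] at hsum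
    have h0 : e 0 = e' 0 := by
      have := congrArg (· % b) hsum
      simpa [Nat.add_mul_mod_self_left, Nat.mod_eq_of_lt (he 0), Nat.mod_eq_of_lt (he' 0)]
        using this
    have hrest : ∑ j : Fin N, e j.succ * b ^ (j : ℕ) = ∑ j : Fin N, e' j.succ * b ^ (j : ℕ) := by
      rw [h0] at hsum
      have := Nat.add_left_cancel hsum
      exact Nat.eq_of_mul_eq_mul_left hb this
    refine Fin.cases h0 (fun j => ?_) i
    exact ih (fun j => e j.succ) (fun j => e' j.succ) (fun j => he _) (fun j => he' _) hrest j

lemma w_split (b : ℕ) (e : Fin n →₀ ℕ) :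
    w (fun i => b ^ n + b ^ (i : ℕ)) e = b ^ n * deg e + ∑ i, e i * b ^ (i : ℕ) := by
  unfold w deg
  rw [Finset.mul_sum, ← Finset.sum_add_distrib]
  refine Finset.sum_congr rfl fun i _ => ?_
  ring

lemma coord_le_deg (e : Fin n →₀ ℕ) (i : Fin n) : e i ≤ deg e :=
  Finset.single_le_sum (f := fun j => e j) (fun j _ => Nat.zero_le _) (Finset.mem_univ i)

lemma weight_unique {b d : ℕ} {m : Fin n → ℕ} (hdb : d ≤ b) (hb : 1 ≤ b)
    (hmd : ∀ i, m i = b ^ n + b ^ (i : ℕ)) (e e' : Fin n →₀ ℕ)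
    (he : deg e < d)
    (hw : w m e' = w m e) :
    e' = e := by
  have hwm : ∀ e0 : Fin n →₀ ℕ, w m e0 = w (fun i => b ^ n + b ^ (i : ℕ)) e0 := fun e0 =>
    Finset.sum_congr rfl fun i _ => by rw [hmd i]
  rw [hwm, hwm] at hw
  have hbn : 0 < b ^ n := Nat.one_le_pow _ _ (by omega)
  have hde : ∀ i, e i < b := fun i => lt_of_le_of_lt (coord_le_deg e i) (lt_of_lt_of_le he hdb)
  have hve : ∑ i, e i * b ^ (i : ℕ) < b ^ n := digits_lt_sum hb _ hde
  rw [w_split, w_split] at hw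
  -- first, deg e' ≤ deg e
  have hdeg' : deg e' ≤ deg e := by
    by_contra hcon
    push_neg at hcon
    have : b ^ n * (deg e + 1) ≤ b ^ n * deg e' := Nat.mul_le_mul_left _ hcon
    have : b ^ n * deg e + b ^ n ≤ b ^ n * deg e' := by rw [Nat.mul_add, mul_one] at this; omega
    omega
  have hde' : ∀ i, e' i < b := fun i =>
    lt_of_le_of_lt (coord_le_deg e' i) (lt_of_le_of_lt hdeg' (lt_of_lt_of_le he hdb))
  have hve' : ∑ i, e' i * b ^ (i : ℕ) < b ^ n := digits_lt_sum hb _ hde'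
  have hdeq : deg e' = deg e := by
    have l : (b ^ n * deg e' + ∑ i, e' i * b ^ (i : ℕ)) / b ^ n = deg e' := by
      rw [Nat.mul_add_div hbn, Nat.div_eq_of_lt hve', add_zero]
    have r : (b ^ n * deg e + ∑ i, e i * b ^ (i : ℕ)) / b ^ n = deg e := by
      rw [Nat.mul_add_div hbn, Nat.div_eq_of_lt hve, add_zero]
    rw [← l, hw, r]
  have hveq : ∑ i, e' i * b ^ (i : ℕ) = ∑ i, e i * b ^ (i : ℕ) := by
    rw [hdeq] at hw
    omega
  ext i
  exact digits_unique (fun j => e' j) (fun j => e j) hde' hde hveq i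


lemma exists_rep {m : Fin n → ℕ} {k : ℕ} (hk : k ∈ AddSubmonoid.closure (Set.range m)) :
    ∃ e : Fin n →₀ ℕ, w m e = k := by
  induction hk using AddSubmonoid.closure_induction with
  | mem x hx =>
    obtain ⟨i, rfl⟩ := hx
    refine ⟨Finsupp.single i 1, ?_⟩
    simp [w, Finsupp.single_apply, ite_mul, Finset.sum_ite_eq]
  | zero => exact ⟨0, by simp [w]⟩
  | add x y hx hy ihx ihy =>
    obtain ⟨e, he⟩ := ihx
    obtain ⟨e', he'⟩ := ihy
    exact ⟨e + e', by rw [w_add, he, he']⟩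

lemma approx {r : ℕ} (f : MvPowerSeries (Fin n) K) (g : Fin r → MvPowerSeries (Fin n) K)
    (H : ∀ m : Fin n → ℕ, (∀ i, 0 < m i) →
        ∃ c : Fin r → PowerSeries K,
          (∀ i, ∀ k ∉ AddSubmonoid.closure (Set.range m),
            PowerSeries.coeff k (c i) = 0) ∧
          monomialCurveSubst m f = ∑ i, c i * monomialCurveSubst m (g i))
    (d : ℕ) : ∃ a : Fin r → MvPowerSeries (Fin n) K, f - ∑ i, a i * g i ∈ J K n d := by
  classical
  set b := d + 1 with hbdef
  set m : Fin n → ℕ := fun i => b ^ n + b ^ (i : ℕ) with hmdef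
  have hmd : ∀ i : Fin n, m i = b ^ n + b ^ (i : ℕ) := fun i => rfl
  have hbn : 0 < b ^ n := Nat.one_le_pow _ _ (by omega)
  have hm : ∀ i, 0 < m i := fun i => Nat.lt_of_lt_of_le hbn (Nat.le_add_right _ _)
  obtain ⟨c, hc, hceq⟩ := H m hm
  set σ : ℕ → (Fin n →₀ ℕ) :=
    fun k => if h : ∃ e : Fin n →₀ ℕ, w m e = k then h.choose else 0 with hσ
  have hσspec : ∀ k, (∃ e : Fin n →₀ ℕ, w m e = k) → w m (σ k) = k := by
    intro k hk
    have h1 : σ k = hk.choose := by simp only [hσ]; rw [dif_pos hk]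
    rw [h1]
    exact hk.choose_spec
  set a : Fin r → MvPowerSeries (Fin n) K := fun i =>
    (fun e => if σ (w m e) = e then PowerSeries.coeff (w m e) (c i) else 0) with ha
  have hsub : ∀ i, monomialCurveSubst m (a i) = c i := by
    intro i
    ext k
    rw [coeff_mcs hm]
    have hterm : ∀ e ∈ W m k, MvPowerSeries.coeff e (a i) =
        if σ k = e then PowerSeries.coeff k (c i) else 0 := by
      intro e he
      have hwk : w m e = k := (mem_W hm).mp he
      rw [MvPowerSeries.coeff_apply]
      simp only [ha]
      rw [hwk]
    rw [Finset.sum_congr rfl hterm,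
      Finset.sum_ite_eq (W m k) (σ k) (fun _ => PowerSeries.coeff k (c i))]
    by_cases hex : ∃ e : Fin n →₀ ℕ, w m e = k
    · rw [if_pos ((mem_W hm).mpr (hσspec k hex))]
    · rw [if_neg (fun hmem => hex ⟨σ k, (mem_W hm).mp hmem⟩)]
      refine (hc i k ?_).symm
      intro hk
      exact hex (exists_rep hk)
  refine ⟨a, ?_⟩
  have hzero : monomialCurveSubst m (f - ∑ i, a i * g i) = 0 := by
    have e1 : monomialCurveSubst m (f - ∑ i, a i * g i)
        = mcsHom hm (f - ∑ i, a i * g i) := rfl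
    rw [e1, map_sub, map_sum]
    rw [Finset.sum_congr rfl (fun i (_ : i ∈ Finset.univ) => map_mul (mcsHom hm) (a i) (g i))]
    show monomialCurveSubst m f -
      ∑ i, monomialCurveSubst m (a i) * monomialCurveSubst m (g i) = 0
    rw [Finset.sum_congr rfl (fun i (_ : i ∈ Finset.univ) => by rw [hsub i]), ← hceq, sub_self]
  refine mem_J.mpr fun e he => ?_
  have h1 : PowerSeries.coeff (w m e) (monomialCurveSubst m (f - ∑ i, a i * g i)) = 0 := by
    rw [hzero]; simp
  rw [coeff_mcs hm] at h1
  have hW : W m (w m e) = {e} := by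
    refine Finset.eq_singleton_iff_unique_mem.mpr ⟨(mem_W hm).mpr rfl, fun x hx => ?_⟩
    exact weight_unique (by omega : d ≤ b) (by omega : 1 ≤ b) hmd e x he ((mem_W hm).mp hx)
  rw [hW, Finset.sum_singleton] at h1
  exact h1
section ML

variable (K n) in
abbrev Q (d : ℕ) := MvPowerSeries (Fin n) K ⧸ J K n d

variable (K n) in
noncomputable abbrev mkJ (d : ℕ) : MvPowerSeries (Fin n) K →+* Q K n d :=
  Ideal.Quotient.mk (J K n d)

lemma mkJ_smul (d : ℕ) (c : K) (x : MvPowerSeries (Fin n) K) :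
    mkJ K n d (c • x) = c • mkJ K n d x := rfl

variable (K n) in
/-- transition ring hom between truncation levels -/
noncomputable def tr {d d' : ℕ} (h : d ≤ d') : Q K n d' →+* Q K n d :=
  Ideal.Quotient.factor (J_antitone h)

lemma tr_mk {d d' : ℕ} (h : d ≤ d') (x : MvPowerSeries (Fin n) K) :
    tr K n h (mkJ K n d' x) = mkJ K n d x := Ideal.Quotient.factor_mk _ _

lemma tr_smul {d d' : ℕ} (h : d ≤ d') (c : K) (x : Q K n d') :
    tr K n h (c • x) = c • tr K n h x := by
  obtain ⟨y, rfl⟩ := Ideal.Quotient.mk_surjective x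
  rw [show c • Ideal.Quotient.mk (J K n d') y = mkJ K n d' (c • y) from rfl]
  rw [tr_mk, tr_mk (x := y), mkJ_smul]

lemma tr_tr {d d' d'' : ℕ} (h : d ≤ d') (h' : d' ≤ d'') (x : Q K n d'') :
    tr K n h (tr K n h' x) = tr K n (le_trans h h') x := by
  obtain ⟨y, rfl⟩ := Ideal.Quotient.mk_surjective x
  rw [tr_mk (x := y), tr_mk, tr_mk]

variable (K n) in
abbrev Mod (r d : ℕ) := K × (Fin r → Q K n d)

variable (K n r) in
/-- transition linear map on the solution ambient modules -/
noncomputable def trM {r : ℕ} {d d' : ℕ} (h : d ≤ d') : Mod K n r d' →ₗ[K] Mod K n r d where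
  toFun p := (p.1, fun i => tr K n h (p.2 i))
  map_add' p q := Prod.ext rfl (funext fun i => (tr K n h).map_add (p.2 i) (q.2 i))
  map_smul' c p := Prod.ext rfl (funext fun i => tr_smul h c (p.2 i))

variable {r : ℕ} (f : MvPowerSeries (Fin n) K) (g : Fin r → MvPowerSeries (Fin n) K)

/-- solutions of `∑ aᵢ gᵢ = λ f` at truncation level `d` -/
noncomputable def S' (d : ℕ) : Submodule K (Mod K n r d) where
  carrier := {p | ∑ i, p.2 i * mkJ K n d (g i) = p.1 • mkJ K n d f}
  add_mem' := by
    intro p q hp hq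
    simp only [Set.mem_setOf_eq] at *
    show ∑ i, (p.2 i + q.2 i) * _ = (p.1 + q.1) • _
    simp only [add_mul, Finset.sum_add_distrib, hp, hq, add_smul]
  zero_mem' := by simp
  smul_mem' := by
    intro c p hp
    simp only [Set.mem_setOf_eq] at *
    show ∑ i, (c • p.2 i) * _ = (c • p.1) • _
    simp only [smul_mul_assoc, ← Finset.smul_sum, hp, smul_smul, smul_eq_mul]

lemma trM_mem_S' {d d' : ℕ} (h : d ≤ d') {p : Mod K n r d'} (hp : p ∈ S' f g d') :
    trM K n h p ∈ S' f g d := by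
  show ∑ i, tr K n h (p.2 i) * mkJ K n d (g i) = p.1 • mkJ K n d f
  have : ∀ i, tr K n h (p.2 i) * mkJ K n d (g i) = tr K n h (p.2 i * mkJ K n d' (g i)) := by
    intro i; rw [map_mul, tr_mk]
  rw [Finset.sum_congr rfl fun i _ => this i, ← map_sum, hp]
  rw [show p.1 • mkJ K n d' f = mkJ K n d' (p.1 • f) from rfl, tr_mk]
  rfl

/-- image at level `d` of the solutions at level `d'` -/
noncomputable def Cim (d d' : ℕ) (h : d ≤ d') : Submodule K (Mod K n r d) :=
  Submodule.map (trM K n h) (S' f g d')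

lemma Cim_le {d d₁ d₂ : ℕ} (h1 : d ≤ d₁) (h2 : d₁ ≤ d₂) :
    Cim f g d d₂ (le_trans h1 h2) ≤ Cim f g d d₁ h1 := by
  rintro x ⟨p, hp, rfl⟩
  refine ⟨trM K n h2 p, trM_mem_S' f g h2 hp, ?_⟩
  ext
  · rfl
  · show tr K n h1 (tr K n h2 _) = _
    rw [tr_tr]
    rfl


section Artin
variable [IsArtinianRing K]

lemma isArtinian_Mod (r d : ℕ) : IsArtinian K (Mod K n r d) := by
  haveI := finite_quot_J (K := K) (n := n) d
  infer_instance

variable {r : ℕ} (f : MvPowerSeries (Fin n) K) (g : Fin r → MvPowerSeries (Fin n) K)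

/-- the chain of images of solution spaces at level `d` -/
noncomputable def cch (d : ℕ) : ℕ →o (Submodule K (Mod K n r d))ᵒᵈ where
  toFun t := Cim f g d (max d t) (le_max_left d t)
  monotone' := by
    intro t t' htt'
    exact Cim_le f g (le_max_left d t) (max_le_max le_rfl htt')

noncomputable def Nd (d : ℕ) : ℕ :=
  haveI := isArtinian_Mod (K := K) (n := n) r d
  (IsArtinian.monotone_stabilizes (cch f g d)).choose

lemma Nd_spec (d : ℕ) : ∀ t, Nd f g d ≤ t → cch f g d (Nd f g d) = cch f g d t := by
  haveI := isArtinian_Mod (K := K) (n := n) r d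
  exact (IsArtinian.monotone_stabilizes (cch f g d)).choose_spec

/-- the stable image -/
noncomputable def T (d : ℕ) : Submodule K (Mod K n r d) :=
  Cim f g d (max d (Nd f g d)) (le_max_left _ _)

lemma Cim_congr {d D1 D2 : ℕ} (hD : D1 = D2) (h1 : d ≤ D1) :
    Cim f g d D1 h1 = Cim f g d D2 (hD ▸ h1) := by subst hD; rfl

lemma T_eq {d d' : ℕ} (h1 : d ≤ d') (h2 : Nd f g d ≤ d') :
    T f g d = Cim f g d d' h1 := by
  have e1 : T f g d = cch f g d d' := Nd_spec f g d d' h2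
  have e2 : (cch f g d) d' = Cim f g d (max d d') (le_max_left d d') := rfl
  rw [e1, e2]
  exact Cim_congr f g (max_eq_right h1) _

lemma T_le_S' (d : ℕ) : T f g d ≤ S' f g d := by
  rintro x ⟨p, hp, rfl⟩
  exact trM_mem_S' f g _ hp

lemma trM_trM {d d' d'' : ℕ} (h : d ≤ d') (h' : d' ≤ d'') (p : Mod K n r d'') :
    trM K n h (trM K n h' p) = trM K n (le_trans h h') p :=
  Prod.ext rfl (funext fun i => tr_tr h h' (p.2 i))

lemma exists_mem_T (H1 : ∀ d, ∃ p ∈ S' f g d, p.1 = 1) (d : ℕ) :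
    ∃ x ∈ T f g d, x.1 = 1 := by
  obtain ⟨p, hp, hp1⟩ := H1 (max d (Nd f g d))
  exact ⟨trM K n (le_max_left _ _) p, ⟨p, hp, rfl⟩, hp1⟩

lemma step_T (d : ℕ) (x : Mod K n r d) (hx : x ∈ T f g d) :
    ∃ y, y ∈ T f g (d + 1) ∧ y.1 = x.1 ∧ trM K n (Nat.le_succ d) y = x := by
  set D := max (max d (Nd f g d)) (max (d + 1) (Nd f g (d + 1))) with hD
  have hdD : d ≤ D := le_trans (le_max_left d (Nd f g d)) (le_max_left _ _)
  have hd1D : d + 1 ≤ D := le_trans (le_max_left _ _) (le_max_right _ _)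
  have hTd : T f g d = Cim f g d D hdD :=
    T_eq f g hdD (le_trans (le_max_right _ _) (le_max_left _ _))
  have hTd1 : T f g (d + 1) = Cim f g (d + 1) D hd1D :=
    T_eq f g hd1D (le_trans (le_max_right _ _) (le_max_right _ _))
  rw [hTd] at hx
  obtain ⟨p, hp, rfl⟩ := hx
  refine ⟨trM K n hd1D p, ?_, rfl, ?_⟩
  · rw [hTd1]; exact ⟨p, hp, rfl⟩
  · exact trM_trM (Nat.le_succ d) hd1D p

/-- a compatible system of solutions -/
noncomputable def seq (H1 : ∀ d, ∃ p ∈ S' f g d, p.1 = 1) :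
    ∀ d, {x : Mod K n r d // x ∈ T f g d ∧ x.1 = 1} := fun d =>
  Nat.rec
    ⟨(exists_mem_T f g H1 0).choose, (exists_mem_T f g H1 0).choose_spec⟩
    (fun d prev =>
      ⟨(step_T f g d prev.1 prev.2.1).choose,
        (step_T f g d prev.1 prev.2.1).choose_spec.1,
        ((step_T f g d prev.1 prev.2.1).choose_spec.2.1).trans prev.2.2⟩)
    d

lemma seq_compat (H1 : ∀ d, ∃ p ∈ S' f g d, p.1 = 1) (d : ℕ) :
    trM K n (Nat.le_succ d) (seq f g H1 (d + 1)).1 = (seq f g H1 d).1 :=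
  (step_T f g d (seq f g H1 d).1 (seq f g H1 d).2.1).choose_spec.2.2


noncomputable def liftQ {d : ℕ} (q : Q K n d) : MvPowerSeries (Fin n) K :=
  (Ideal.Quotient.mk_surjective q).choose

lemma mkJ_liftQ {d : ℕ} (q : Q K n d) : mkJ K n d (liftQ q) = q :=
  (Ideal.Quotient.mk_surjective q).choose_spec

variable (H1 : ∀ d, ∃ p ∈ S' f g d, p.1 = 1)

/-- the limit solution -/
noncomputable def A (i : Fin r) : MvPowerSeries (Fin n) K :=
  fun e => MvPowerSeries.coeff e (liftQ ((seq f g H1 (deg e + 1)).1.2 i))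

lemma coherence (i : Fin r) (e : Fin n →₀ ℕ) (d : ℕ) (hd : deg e < d) :
    MvPowerSeries.coeff e (liftQ ((seq f g H1 d).1.2 i)) =
      MvPowerSeries.coeff e (A f g H1 i) := by
  induction d, hd using Nat.le_induction with
  | base => rfl
  | succ d hd ih =>
    have hc : tr K n (Nat.le_succ d) ((seq f g H1 (d + 1)).1.2 i) = (seq f g H1 d).1.2 i :=
      congrArg (fun p => p.2 i) (seq_compat f g H1 d)
    have h2 : mkJ K n d (liftQ ((seq f g H1 (d + 1)).1.2 i)) =
        mkJ K n d (liftQ ((seq f g H1 d).1.2 i)) :=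
      calc mkJ K n d (liftQ ((seq f g H1 (d + 1)).1.2 i))
          = tr K n (Nat.le_succ d) (mkJ K n (d + 1) (liftQ ((seq f g H1 (d + 1)).1.2 i))) :=
            (tr_mk _ _).symm
        _ = tr K n (Nat.le_succ d) ((seq f g H1 (d + 1)).1.2 i) := by rw [mkJ_liftQ]
        _ = (seq f g H1 d).1.2 i := hc
        _ = mkJ K n d (liftQ ((seq f g H1 d).1.2 i)) := (mkJ_liftQ _).symm
    have h3 := (Ideal.Quotient.mk_eq_mk_iff_sub_mem _ _).mp h2
    have h4 := mem_J.mp h3 e hd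
    rw [map_sub, sub_eq_zero] at h4
    rw [h4, ih]

lemma closed (H : ∀ d, ∃ a : Fin r → MvPowerSeries (Fin n) K, f - ∑ i, a i * g i ∈ J K n d) :
    ∃ a : Fin r → MvPowerSeries (Fin n) K, f = ∑ i, a i * g i := by
  have H1 : ∀ d, ∃ p ∈ S' f g d, p.1 = 1 := by
    intro d
    obtain ⟨a, ha⟩ := H d
    refine ⟨(1, fun i => mkJ K n d (a i)), ?_, rfl⟩
    show ∑ i, mkJ K n d (a i) * mkJ K n d (g i) = (1 : K) • mkJ K n d f
    have h5 : mkJ K n d (∑ i, a i * g i) = mkJ K n d f := by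
      rw [eq_comm, Ideal.Quotient.mk_eq_mk_iff_sub_mem]; exact ha
    rw [one_smul, ← h5, map_sum]
    exact Finset.sum_congr rfl fun i _ => (map_mul _ _ _).symm
  refine ⟨A f g H1, ?_⟩
  have key : ∀ d, f - ∑ i, A f g H1 i * g i ∈ J K n d := by
    intro d
    have hS : ∑ i, (seq f g H1 d).1.2 i * mkJ K n d (g i) =
        (seq f g H1 d).1.1 • mkJ K n d f := T_le_S' f g d (seq f g H1 d).2.1
    have hx1 : (seq f g H1 d).1.1 = 1 := (seq f g H1 d).2.2
    have hmkA : ∀ i, mkJ K n d (A f g H1 i) = (seq f g H1 d).1.2 i := by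
      intro i
      have h6 : mkJ K n d (A f g H1 i) = mkJ K n d (liftQ ((seq f g H1 d).1.2 i)) := by
        rw [Ideal.Quotient.mk_eq_mk_iff_sub_mem]
        rw [mem_J]
        intro e he
        rw [map_sub, coherence f g H1 i e d he, sub_self]
      rw [h6, mkJ_liftQ]
    have h7 : mkJ K n d (f - ∑ i, A f g H1 i * g i) = 0 := by
      rw [map_sub, map_sum]
      have e2 : ∀ i, mkJ K n d (A f g H1 i * g i) =
          (seq f g H1 d).1.2 i * mkJ K n d (g i) := fun i => by rw [map_mul, hmkA]
      rw [Finset.sum_congr rfl fun i _ => e2 i, hS, hx1, one_smul, sub_self]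
    exact Ideal.Quotient.eq_zero_iff_mem.mp h7
  exact sub_eq_zero.mp (eq_zero_of_forall_mem_J key)

end Artin
end ML
end MCS

/-- Theorem 8 of the paper. For `f, g₁, …, g_r ∈ K[[x₁,…,xₙ]]`,
`f ∈ (g₁, …, g_r)` iff for every tuple of positive integers `m = (m₁,…,mₙ)`, the series
`φ_m(f)` lies in the ideal of the subring `K[[t^{m₁},…,t^{mₙ}]] ⊆ K[[t]]` generated by
`φ_m(g₁), …, φ_m(g_r)`; the latter membership is expressed by the existence of
coefficients `cᵢ` lying in the subring (i.e. whose `t^k`-coefficients vanish for `k`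
outside the additive submonoid generated by `m₁, …, mₙ`) with `φ_m(f) = ∑ᵢ cᵢ·φ_m(gᵢ)`. -/
theorem mem_ideal_iff_monomial_curves
    {K : Type*} [Field K] (n r : ℕ)
    (f : MvPowerSeries (Fin n) K) (g : Fin r → MvPowerSeries (Fin n) K) :
    f ∈ Ideal.span (Set.range g) ↔
      ∀ m : Fin n → ℕ, (∀ i, 0 < m i) →
        ∃ c : Fin r → PowerSeries K,
          (∀ i, ∀ k ∉ AddSubmonoid.closure (Set.range m),
            PowerSeries.coeff k (c i) = 0) ∧
          monomialCurveSubst m f = ∑ i, c i * monomialCurveSubst m (g i) := by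
  classical
  constructor
  · intro hf m hm
    obtain ⟨a, ha⟩ := Ideal.mem_span_range_iff_exists_fun.mp hf
    refine ⟨fun i => monomialCurveSubst m (a i),
      fun i k hk => MCS.coeff_mcs_eq_zero hm (a i) k hk, ?_⟩
    rw [← ha]
    rw [show monomialCurveSubst m (∑ i, a i * g i) = MCS.mcsHom hm (∑ i, a i * g i) from rfl,
      map_sum]
    exact Finset.sum_congr rfl fun i _ => map_mul (MCS.mcsHom hm) (a i) (g i)
  · intro H
    obtain ⟨a, ha⟩ := MCS.closed f g (MCS.approx f g H)
    exact Ideal.mem_span_range_iff_exists_fun.mpr ⟨a, ha.symm⟩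
end
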